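/- arXiv:2008.13010 — 6 statements merged into one kernel-verified Lean document; each statement's English description precedes it below -/
import Mathlib

section
/- Let 𝒞 ⊆ ℝ^{n+m} and 𝒫 ⊆ ℝⁿ be proper C-sets and let A ∈ ℝ^{n×n}, B ∈ ℝ^{n×m}. Then for every (x,u) ∈ ℝⁿ × ℝᵐ, γ(𝒞,(x,u)) + γ(𝒫, Ax+Bu) = γ((𝒞* ⊕ Mᵀ𝒫*)*, (x,u)), i.e. the sum of the gauge of 𝒞 at (x,u) and the gauge of 𝒫 at Ax+Bu equals the gauge at (x,u) of the polar of the Minkowski sum of 𝒞* and the image Mᵀ𝒫*. -/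
open Pointwise Filter Topology Matrix

noncomputable section

/-- ℝⁿ with the standard (Euclidean) inner product. -/
abbrev Rsp (n : ℕ) := EuclideanSpace ℝ (Fin n)

/-- ℝ^{n+m} realized as the L²-product ℝⁿ × ℝᵐ. -/
abbrev Rsp2 (n m : ℕ) := WithLp 2 (Rsp n × Rsp m)

/-- A C-set: compact, convex, containing the origin. -/
def IsCSet {E : Type*} [NormedAddCommGroup E] [NormedSpace ℝ E] (X : Set E) : Prop :=
  IsCompact X ∧ Convex ℝ X ∧ (0 : E) ∈ X

/-- A proper C-set: a C-set containing the origin in its interior. -/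
def IsProperCSet {E : Type*} [NormedAddCommGroup E] [NormedSpace ℝ E] (X : Set E) : Prop :=
  IsCSet X ∧ (0 : E) ∈ interior X

/-- The polar set 𝒳* = {y : ⟨y,x⟩ ≤ 1 for all x ∈ 𝒳}. -/
def polarSet {E : Type*} [NormedAddCommGroup E] [InnerProductSpace ℝ E] (X : Set E) : Set E :=
  {y | ∀ x ∈ X, inner ℝ y x ≤ (1 : ℝ)}

/-- The Minkowski (gauge) function γ(𝒳,y) = inf{η ≥ 0 : y ∈ η𝒳}. -/
def mgauge {E : Type*} [NormedAddCommGroup E] [NormedSpace ℝ E] (X : Set E) (y : E) : ℝ :=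
  sInf {η : ℝ | 0 ≤ η ∧ y ∈ η • X}

variable {n m : ℕ}

/-- The map M = (A B) : ℝ^{n+m} → ℝⁿ, M(x,u) = Ax + Bu. -/
def Mfwd (A : Matrix (Fin n) (Fin n) ℝ) (B : Matrix (Fin n) (Fin m) ℝ) (w : Rsp2 n m) : Rsp n :=
  Matrix.toEuclideanLin A w.ofLp.1 + Matrix.toEuclideanLin B w.ofLp.2

/-- The transpose map Mᵀ : ℝⁿ → ℝ^{n+m}, Mᵀp = (Aᵀp, Bᵀp). -/
def Mtr (A : Matrix (Fin n) (Fin n) ℝ) (B : Matrix (Fin n) (Fin m) ℝ) (p : Rsp n) : Rsp2 n m :=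
  WithLp.toLp 2 (Matrix.toEuclideanLin Aᵀ p, Matrix.toEuclideanLin Bᵀ p)

/-- The projection P_x : ℝ^{n+m} → ℝⁿ, (x,u) ↦ x. -/
def Pxproj : Rsp2 n m → Rsp n := fun w => w.ofLp.1

section Aux

variable {E : Type*} [NormedAddCommGroup E] [InnerProductSpace ℝ E] {X : Set E}

theorem mgauge_eq_gauge (h0 : (0:E) ∈ X) (y : E) : mgauge X y = gauge X y := by
  rcases eq_or_ne y 0 with rfl | hy
  · rw [gauge_zero]
    refine le_antisymm (csInf_le ⟨0, fun a ha => ha.1⟩ ⟨le_refl 0, ?_⟩)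
      (le_csInf ⟨1, zero_le_one, ⟨0, h0, by simp⟩⟩ fun a ha => ha.1)
    exact ⟨0, h0, by simp⟩
  · unfold mgauge gauge
    congr 1
    ext η
    simp only [Set.mem_setOf_eq, and_congr_left_iff]
    intro hη
    constructor
    · intro h
      rcases h.eq_or_lt with rfl | h'
      · exact absurd hη (by simp [Set.zero_smul_set ⟨0, h0⟩, hy])
      · exact h'
    · exact le_of_lt

theorem zero_mem_polarSet : (0:E) ∈ polarSet X := by
  intro x _; simp

theorem convex_polarSet : Convex ℝ (polarSet X) := by
  intro y hy z hz a b ha hb hab x hx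
  have := hy x hx; have := hz x hx
  calc (inner ℝ (a • y + b • z) x : ℝ) = a * inner ℝ y x + b * inner ℝ z x := by
        rw [inner_add_left, real_inner_smul_left, real_inner_smul_left]
    _ ≤ a * 1 + b * 1 := add_le_add
        (mul_le_mul_of_nonneg_left (hy x hx) ha) (mul_le_mul_of_nonneg_left (hz x hx) hb)
    _ = 1 := by linarith

theorem isClosed_polarSet : IsClosed (polarSet X) := by
  have : polarSet X = ⋂ x ∈ X, {y : E | inner ℝ y x ≤ (1:ℝ)} := by
    ext y; simp [polarSet]
  rw [this]
  exact isClosed_biInter fun x _ =>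
    isClosed_le (Continuous.inner continuous_id continuous_const) continuous_const

/-- If 0 is interior to X, the polar is bounded. -/
theorem isBounded_polarSet (h0 : (0:E) ∈ interior X) : Bornology.IsBounded (polarSet X) := by
  obtain ⟨ε, hε, hball⟩ := Metric.isOpen_iff.1 isOpen_interior 0 h0
  refine (Metric.isBounded_iff_subset_closedBall 0).2 ⟨2/ε, fun y hy => ?_⟩
  have hεpos : (0:ℝ) < 2/ε := div_pos two_pos hε
  simp only [Metric.mem_closedBall, dist_zero_right]
  by_contra hlt
  push_neg at hlt
  have hy0 : y ≠ 0 := by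
    intro h; rw [h, norm_zero] at hlt
    exact absurd hεpos (not_lt.2 hlt.le)
  set x : E := (ε/2 / ‖y‖) • y with hxdef
  have hxmem : x ∈ X := by
    apply interior_subset
    apply hball
    simp only [Metric.mem_ball, dist_zero_right, hxdef, norm_smul, Real.norm_eq_abs]
    rw [abs_of_pos (div_pos (div_pos hε two_pos) (norm_pos_iff.2 hy0))]
    rw [div_mul_cancel₀ _ (norm_ne_zero_iff.2 hy0)]
    linarith
  have := hy x hxmem
  rw [hxdef, real_inner_smul_right, real_inner_self_eq_norm_sq] at this
  have hyne : ‖y‖ ≠ 0 := norm_ne_zero_iff.2 hy0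
  have h2 : ε/2/‖y‖ * ‖y‖^2 = ε/2 * ‖y‖ := by
    field_simp
  rw [h2] at this
  have : ‖y‖ ≤ 2/ε := by
    rw [le_div_iff₀ hε]
    nlinarith
  exact absurd this (not_le.2 hlt)

theorem isCompact_polarSet [FiniteDimensional ℝ E] (h0 : (0:E) ∈ interior X) :
    IsCompact (polarSet X) :=
  Metric.isCompact_iff_isClosed_bounded.2 ⟨isClosed_polarSet, isBounded_polarSet h0⟩

/-- Gauge of the polar equals the support function. -/
theorem gauge_polarSet_eq (hX : IsCompact X) (h0 : (0:E) ∈ X) (w : E) :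
    gauge (polarSet X) w = sSup ((fun z => (inner ℝ z w : ℝ)) '' X) := by
  set S := (fun z => (inner ℝ z w : ℝ)) '' X with hS
  have hne : S.Nonempty := ⟨0, 0, h0, by simp⟩
  have hbdd : BddAbove S := (hX.image (Continuous.inner continuous_id continuous_const)).bddAbove
  set h := sSup S with hh
  have hnn : 0 ≤ h := le_csSup hbdd ⟨0, h0, by simp⟩
  have key : ∀ r : ℝ, h < r → w ∈ r • polarSet X := by
    intro r hr
    have hrpos : 0 < r := lt_of_le_of_lt hnn hr
    refine ⟨r⁻¹ • w, ?_, by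
      show r • r⁻¹ • w = w
      rw [smul_smul, mul_inv_cancel₀ hrpos.ne', one_smul]⟩
    intro x hx
    have hxw : (inner ℝ x w : ℝ) ≤ h := le_csSup hbdd ⟨x, hx, rfl⟩
    rw [real_inner_smul_left, real_inner_comm]
    rw [inv_mul_le_iff₀ hrpos, mul_one]
    exact hxw.trans hr.le
  apply le_antisymm
  · refine le_of_forall_pos_le_add fun ε hε => ?_
    exact gauge_le_of_mem (by linarith) (key _ (by linarith))
  · refine le_csInf ⟨h + 1, ?_, key _ (by linarith)⟩ ?_
    · linarith
    · rintro r ⟨hrpos, y, hy, rfl⟩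
      apply csSup_le hne
      rintro a ⟨x, hx, rfl⟩
      show (inner ℝ x (r • y) : ℝ) ≤ r
      rw [real_inner_smul_right]
      calc r * (inner ℝ x y : ℝ) ≤ r * 1 := by
            apply mul_le_mul_of_nonneg_left _ hrpos.le
            rw [real_inner_comm]; exact hy x hx
        _ = r := mul_one r
  -- note: w ∈ r • polarSet X means w = r • y
  -- handled above

theorem bipolar [CompleteSpace E] (hcl : IsClosed X) (hconv : Convex ℝ X) (h0 : (0:E) ∈ X) :
    polarSet (polarSet X) = X := by
  apply Set.Subset.antisymm
  · intro z hz
    by_contra hzX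
    obtain ⟨f, u, hfs, hfz⟩ := geometric_hahn_banach_closed_point hconv hcl hzX
    have hu : 0 < u := by simpa using hfs 0 h0
    set v : E := (InnerProductSpace.toDual ℝ E).symm f with hv
    have hfv : ∀ x : E, (inner ℝ v x : ℝ) = f x := fun x => InnerProductSpace.toDual_symm_apply
    have hy : u⁻¹ • v ∈ polarSet X := by
      intro x hx
      rw [real_inner_smul_left, hfv]
      rw [inv_mul_le_iff₀ hu, mul_one]
      exact (hfs x hx).le
    have := hz _ hy
    rw [real_inner_smul_right, real_inner_comm, hfv] at this
    have h1 : 1 < u⁻¹ * f z := by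
      rw [lt_inv_mul_iff₀ hu, mul_one]
      exact hfz
    linarith
  · intro x hx y hy
    rw [real_inner_comm]
    exact hy x hx

/-- Support function of the polar equals the gauge, for proper C-sets. -/
theorem sSup_polarSet_eq [CompleteSpace E] [FiniteDimensional ℝ E]
    (hX : IsCompact X) (hconv : Convex ℝ X) (h0 : (0:E) ∈ interior X) (w : E) :
    sSup ((fun z => (inner ℝ z w : ℝ)) '' polarSet X) = gauge X w := by
  have := gauge_polarSet_eq (X := polarSet X) (isCompact_polarSet h0) zero_mem_polarSet w
  rw [bipolar hX.isClosed hconv (interior_subset h0)] at this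
  exact this.symm

end Aux

/-- γ(𝒞,(x,u)) + γ(𝒫, Ax+Bu) = γ((𝒞* ⊕ Mᵀ𝒫*)*, (x,u)). -/
theorem stmt_0 (n m : ℕ) (C : Set (Rsp2 n m)) (P : Set (Rsp n))
    (hC : IsProperCSet C) (hP : IsProperCSet P)
    (A : Matrix (Fin n) (Fin n) ℝ) (B : Matrix (Fin n) (Fin m) ℝ) :
    ∀ (x : Rsp n) (u : Rsp m),
      mgauge C (WithLp.toLp 2 (x, u) : Rsp2 n m) + mgauge P (Mfwd A B (WithLp.toLp 2 (x, u))) =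
        mgauge (polarSet (polarSet C + Mtr A B '' polarSet P)) (WithLp.toLp 2 (x, u) : Rsp2 n m) := by
  intro x u
  set w : Rsp2 n m := (WithLp.toLp 2 (x, u) : Rsp2 n m) with hw
  obtain ⟨⟨hCc, hCconv, hC0⟩, hCint⟩ := hC
  obtain ⟨⟨hPc, hPconv, hP0⟩, hPint⟩ := hP
  -- linearity and continuity of Mtr
  have hlin : IsLinearMap ℝ (Mtr A B : Rsp n → Rsp2 n m) := by
    constructor
    · intro p q
      show WithLp.toLp 2 (Matrix.toEuclideanLin Aᵀ (p + q), Matrix.toEuclideanLin Bᵀ (p + q)) =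
        Mtr A B p + Mtr A B q
      rw [map_add, map_add]
      rfl
    · intro c p
      show WithLp.toLp 2 (Matrix.toEuclideanLin Aᵀ (c • p), Matrix.toEuclideanLin Bᵀ (c • p)) =
        c • Mtr A B p
      rw [_root_.map_smul, _root_.map_smul]
      rfl
  have hcont : Continuous (Mtr A B : Rsp n → Rsp2 n m) :=
    by unfold Mtr; fun_prop
  have hMtr0 : Mtr A B (0 : Rsp n) = 0 := (hlin.mk' (Mtr A B)).map_zero
  -- adjoint identity
  have hA : Aᵀ = Aᴴ := by
    ext i j; simp [Matrix.conjTranspose_apply]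
  have hB : Bᵀ = Bᴴ := by
    ext i j; simp [Matrix.conjTranspose_apply]
  have hadj : ∀ q : Rsp n, (inner ℝ (Mtr A B q) w : ℝ) = inner ℝ q (Mfwd A B w) := by
    intro q
    have := WithLp.prod_inner_apply (𝕜 := ℝ) (Mtr A B q) w
    rw [this]
    show (inner ℝ (Matrix.toEuclideanLin Aᵀ q) x + inner ℝ (Matrix.toEuclideanLin Bᵀ q) u : ℝ) = _
    rw [hA, hB, Matrix.toEuclideanLin_conjTranspose_eq_adjoint,
      Matrix.toEuclideanLin_conjTranspose_eq_adjoint,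
      LinearMap.adjoint_inner_left, LinearMap.adjoint_inner_left]
    show _ = (inner ℝ q (Matrix.toEuclideanLin A x + Matrix.toEuclideanLin B u) : ℝ)
    rw [inner_add_right]
  -- the Minkowski sum
  set S : Set (Rsp2 n m) := polarSet C with hSdef
  set T : Set (Rsp2 n m) := Mtr A B '' polarSet P with hTdef
  have hScomp : IsCompact S := isCompact_polarSet hCint
  have hTcomp : IsCompact T := (isCompact_polarSet hPint).image hcont
  have hD0 : (0 : Rsp2 n m) ∈ S + T :=
    ⟨0, zero_mem_polarSet, 0, ⟨0, zero_mem_polarSet, hMtr0⟩, by simp⟩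
  have hinnercont : Continuous (fun z : Rsp2 n m => (inner ℝ z w : ℝ)) :=
    Continuous.inner continuous_id continuous_const
  have hSne : ((fun z : Rsp2 n m => (inner ℝ z w : ℝ)) '' S).Nonempty :=
    ⟨_, 0, zero_mem_polarSet, rfl⟩
  have hTne : ((fun z : Rsp2 n m => (inner ℝ z w : ℝ)) '' T).Nonempty :=
    ⟨_, Mtr A B 0, ⟨0, zero_mem_polarSet, rfl⟩, rfl⟩
  have hSbdd : BddAbove ((fun z : Rsp2 n m => (inner ℝ z w : ℝ)) '' S) :=
    (hScomp.image hinnercont).bddAbove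
  have hTbdd : BddAbove ((fun z : Rsp2 n m => (inner ℝ z w : ℝ)) '' T) :=
    (hTcomp.image hinnercont).bddAbove
  rw [mgauge_eq_gauge (zero_mem_polarSet (X := S + T)),
    mgauge_eq_gauge hC0, mgauge_eq_gauge hP0,
    gauge_polarSet_eq (hScomp.add hTcomp) hD0]
  have himg : (fun z : Rsp2 n m => (inner ℝ z w : ℝ)) '' (S + T)
      = ((fun z : Rsp2 n m => (inner ℝ z w : ℝ)) '' S)
        + ((fun z : Rsp2 n m => (inner ℝ z w : ℝ)) '' T) := by
    ext a
    constructor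
    · rintro ⟨z, ⟨s, hs, t, ht, rfl⟩, rfl⟩
      exact ⟨_, ⟨s, hs, rfl⟩, _, ⟨t, ht, rfl⟩, (inner_add_left s t w).symm⟩
    · rintro ⟨a1, ⟨s, hs, rfl⟩, a2, ⟨t, ht, rfl⟩, rfl⟩
      exact ⟨s + t, ⟨s, hs, t, ht, rfl⟩, inner_add_left s t w⟩
  rw [himg, csSup_add hSne hSbdd hTne hTbdd]
  have h1 : sSup ((fun z : Rsp2 n m => (inner ℝ z w : ℝ)) '' S) = gauge C w :=
    sSup_polarSet_eq hCc hCconv hCint w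
  have h2 : (fun z : Rsp2 n m => (inner ℝ z w : ℝ)) '' T
      = (fun q : Rsp n => (inner ℝ q (Mfwd A B w) : ℝ)) '' polarSet P := by
    rw [hTdef, Set.image_image]
    exact Set.image_congr fun q _ => hadj q
  rw [h1, h2, sSup_polarSet_eq hPc hPconv hPint]
end
end

section
/- Let 𝒞 ⊆ ℝ^{n+m} and 𝒫 ⊆ ℝⁿ be proper C-sets and let A ∈ ℝ^{n×n}, B ∈ ℝ^{n×m}. Define 𝒯⁺ = (𝒞* ⊕ Mᵀ𝒫*)* and 𝒫⁺ = P_x𝒯⁺. Then 𝒯⁺ is a proper C-set in ℝ^{n+m} and 𝒫⁺ is a proper C-set in ℝⁿ. -/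
open Pointwise Filter Topology Matrix

noncomputable section

variable {n m : ℕ}

section Aux

variable {E : Type*} [NormedAddCommGroup E] [InnerProductSpace ℝ E]

lemma aux_polar_convex (X : Set E) : Convex ℝ (polarSet X) := by
  intro y1 h1 y2 h2 a b ha hb hab x hx
  have h1' := h1 x hx
  have h2' := h2 x hx
  show inner ℝ (a • y1 + b • y2) x ≤ (1:ℝ)
  rw [inner_add_left, real_inner_smul_left, real_inner_smul_left]
  nlinarith

lemma aux_polar_closed (X : Set E) : IsClosed (polarSet X) := by
  have : polarSet X = ⋂ x ∈ X, {y : E | inner ℝ y x ≤ (1:ℝ)} := by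
    ext y; simp [polarSet]
  rw [this]
  refine isClosed_biInter fun x _ => isClosed_le ?_ continuous_const
  exact Continuous.inner continuous_id continuous_const

lemma aux_polar_zero_mem (X : Set E) : (0 : E) ∈ polarSet X := by
  intro x _; simp

lemma aux_ball_subset_polar {X : Set E} {R : ℝ} (hR : 0 < R)
    (hX : X ⊆ Metric.closedBall 0 R) : Metric.ball 0 R⁻¹ ⊆ polarSet X := by
  intro y hy x hx
  have hy' : ‖y‖ < R⁻¹ := by simpa using hy
  have hx' : ‖x‖ ≤ R := by simpa using hX hx
  have h1 : inner ℝ y x ≤ ‖y‖ * ‖x‖ := real_inner_le_norm y x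
  have h2 : R⁻¹ * R = 1 := inv_mul_cancel₀ hR.ne'
  nlinarith [norm_nonneg y, norm_nonneg x]

lemma aux_polar_subset_closedBall {X : Set E} {ε : ℝ} (hε : 0 < ε)
    (hX : Metric.ball 0 ε ⊆ X) : polarSet X ⊆ Metric.closedBall 0 (2/ε) := by
  intro y hy
  rcases eq_or_ne y 0 with rfl | hy0
  · simp; positivity
  · have hyn : 0 < ‖y‖ := norm_pos_iff.mpr hy0
    set c : ℝ := ε / (2 * ‖y‖) with hc
    have hcpos : 0 < c := by positivity
    have hxmem : c • y ∈ X := by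
      apply hX
      rw [Metric.mem_ball, dist_zero_right, norm_smul, Real.norm_eq_abs, abs_of_pos hcpos]
      have h3 : c * ‖y‖ = ε / 2 := by
        rw [hc, div_mul_eq_mul_div, mul_div_mul_right _ _ hyn.ne']
      linarith
    have h4 := hy _ hxmem
    rw [real_inner_smul_right, real_inner_self_eq_norm_sq] at h4
    have h5 : c * ‖y‖ ^ 2 = ε * ‖y‖ / 2 := by
        rw [hc, sq, ← mul_assoc, div_mul_eq_mul_div, mul_div_mul_right _ _ hyn.ne']; ring
    rw [h5] at h4
    simp only [Metric.mem_closedBall, dist_zero_right]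
    rw [le_div_iff₀ hε]
    nlinarith

lemma aux_polar_compact [FiniteDimensional ℝ E] {X : Set E} (hX : (0:E) ∈ interior X) :
    IsCompact (polarSet X) := by
  obtain ⟨ε, hε, hb⟩ := Metric.mem_nhds_iff.mp (mem_interior_iff_mem_nhds.mp hX)
  exact (isCompact_closedBall (0:E) (2/ε)).of_isClosed_subset (aux_polar_closed X)
    (aux_polar_subset_closedBall hε hb)

lemma aux_zero_mem_interior_polar {X : Set E} (hX : IsCompact X) :
    (0:E) ∈ interior (polarSet X) := by
  obtain ⟨R, hR, hsub⟩ := hX.isBounded.subset_closedBall_lt 0 0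
  exact mem_interior.mpr ⟨_, aux_ball_subset_polar hR hsub, Metric.isOpen_ball,
    Metric.mem_ball_self (inv_pos.mpr hR)⟩

end Aux

/-- 𝒯⁺ = (𝒞* ⊕ Mᵀ𝒫*)* is a proper C-set in ℝ^{n+m} and
𝒫⁺ = P_x𝒯⁺ is a proper C-set in ℝⁿ. -/
theorem stmt_1 (n m : ℕ) (C : Set (Rsp2 n m)) (P : Set (Rsp n))
    (hC : IsProperCSet C) (hP : IsProperCSet P)
    (A : Matrix (Fin n) (Fin n) ℝ) (B : Matrix (Fin n) (Fin m) ℝ)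
    (Tplus : Set (Rsp2 n m)) (hT : Tplus = polarSet (polarSet C + Mtr A B '' polarSet P))
    (Pplus : Set (Rsp n)) (hPp : Pplus = Pxproj '' Tplus) :
    IsProperCSet Tplus ∧ IsProperCSet Pplus := by
  obtain ⟨⟨hCcomp, hCconv, hC0⟩, hCint⟩ := hC
  obtain ⟨⟨hPcomp, hPconv, hP0⟩, hPint⟩ := hP
  -- continuity and linearity of the auxiliary maps
  have hMtr0 : Mtr A B 0 = 0 := by
    simp only [Mtr, map_zero]; rfl
  have hMtrCont : Continuous (Mtr A B) := by
    have h1 : Continuous fun p : Rsp n =>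
        ((Matrix.toEuclideanLin Aᵀ p, Matrix.toEuclideanLin Bᵀ p) : Rsp n × Rsp m) :=
      (Matrix.toEuclideanLin Aᵀ).continuous_of_finiteDimensional.prodMk
        (Matrix.toEuclideanLin Bᵀ).continuous_of_finiteDimensional
    exact (WithLp.prodContinuousLinearEquiv 2 ℝ (Rsp n) (Rsp m)).symm.continuous.comp h1
  have hPxCont : Continuous (Pxproj : Rsp2 n m → Rsp n) :=
    continuous_fst.comp (WithLp.prodContinuousLinearEquiv 2 ℝ (Rsp n) (Rsp m)).continuous
  have hPxLin : IsLinearMap ℝ (Pxproj : Rsp2 n m → Rsp n) :=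
    ⟨fun _ _ => rfl, fun _ _ => rfl⟩
  -- the set S = C* + Mᵀ '' P*
  set S : Set (Rsp2 n m) := polarSet C + Mtr A B '' polarSet P with hS
  -- compactness of C* and P*
  have hCpc : IsCompact (polarSet C) := aux_polar_compact hCint
  have hPpc : IsCompact (polarSet P) := aux_polar_compact hPint
  have hScomp : IsCompact S := hCpc.add (hPpc.image hMtrCont)
  -- 0 is in the image part and in S
  have h0img : (0 : Rsp2 n m) ∈ Mtr A B '' polarSet P :=
    ⟨0, aux_polar_zero_mem P, hMtr0⟩
  have hCpS : polarSet C ⊆ S := by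
    intro a ha
    exact Set.add_mem_add ha h0img |>.imp (fun _ h => h) |> fun _ => by
      simpa using Set.add_mem_add ha h0img
  -- 0 ∈ interior S
  have hSint : (0 : Rsp2 n m) ∈ interior S := by
    obtain ⟨R, hR, hsub⟩ := hCcomp.isBounded.subset_closedBall_lt 0 0
    have hball : Metric.ball (0 : Rsp2 n m) R⁻¹ ⊆ S :=
      fun y hy => hCpS (aux_ball_subset_polar hR hsub hy)
    exact mem_interior.mpr ⟨_, hball, Metric.isOpen_ball,
      Metric.mem_ball_self (inv_pos.mpr hR)⟩
  -- properties of Tplus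
  have hTcomp : IsCompact Tplus := hT ▸ aux_polar_compact hSint
  have hTconv : Convex ℝ Tplus := hT ▸ aux_polar_convex S
  have hT0 : (0 : Rsp2 n m) ∈ Tplus := hT ▸ aux_polar_zero_mem S
  have hTint : (0 : Rsp2 n m) ∈ interior Tplus := hT ▸ aux_zero_mem_interior_polar hScomp
  refine ⟨⟨⟨hTcomp, hTconv, hT0⟩, hTint⟩, ⟨⟨?_, ?_, ?_⟩, ?_⟩⟩
  · exact hPp ▸ hTcomp.image hPxCont
  · exact hPp ▸ hTconv.is_linear_image hPxLin
  · exact hPp ▸ ⟨0, hT0, rfl⟩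
  · obtain ⟨ε, hε, hball⟩ := Metric.mem_nhds_iff.mp (mem_interior_iff_mem_nhds.mp hTint)
    have hsub : Metric.ball (0 : Rsp n) ε ⊆ Pplus := by
      intro x hx
      have hx' : ‖x‖ < ε := by simpa using hx
      set w : Rsp2 n m := WithLp.toLp 2 ((x, 0) : Rsp n × Rsp m) with hw
      have hwn : ‖w‖ = ‖x‖ := by
        rw [WithLp.prod_norm_eq_of_L2]
        simp [hw]
      have hwT : w ∈ Tplus := hball (by simpa [hwn] using hx')
      exact hPp ▸ ⟨w, hwT, rfl⟩
    exact mem_interior.mpr ⟨_, hsub, Metric.isOpen_ball, Metric.mem_ball_self hε⟩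
end
end

section
/- Let 𝒞 ⊆ ℝ^{n+m} and 𝒫 ⊆ ℝⁿ be proper C-sets and let A ∈ ℝ^{n×n}, B ∈ ℝ^{n×m}. Define 𝒯⁺ = (𝒞* ⊕ Mᵀ𝒫*)* and 𝒫⁺ = P_x𝒯⁺. Then for every x ∈ ℝⁿ the infimum over u ∈ ℝᵐ of γ(𝒞,(x,u)) + γ(𝒫, Ax+Bu) is attained and equals γ(𝒫⁺, x); in particular the value function V⁺(x) = min_u [γ(𝒞,(x,u)) + γ(𝒫, Ax+Bu)] is the Minkowski function of the proper C-set 𝒫⁺. -/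
set_option maxHeartbeats 1000000
set_option synthInstance.maxHeartbeats 400000


open Pointwise Filter Topology Matrix

noncomputable section

variable {n m : ℕ}

namespace StmtAux

variable {E : Type*} [NormedAddCommGroup E] [InnerProductSpace ℝ E]

/-- The support function of a set `T`. -/
def supf (T : Set E) (y : E) : ℝ := sSup ((fun p => (inner ℝ p y : ℝ)) '' T)

lemma bddAbove_inner_image {T : Set E} (hT : IsCompact T) (y : E) :
    BddAbove ((fun p => (inner ℝ p y : ℝ)) '' T) :=
  (hT.image (continuous_id.inner continuous_const)).bddAbove

lemma zero_mem_polar (X : Set E) : (0 : E) ∈ polarSet X := by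
  intro x hx; simp [inner_zero_left]

lemma polar_isClosed (X : Set E) : IsClosed (polarSet X) := by
  have h : polarSet X = ⋂ x ∈ X, {y : E | (inner ℝ y x : ℝ) ≤ 1} := by
    ext y; simp [polarSet]
  rw [h]
  exact isClosed_biInter fun x _ =>
    isClosed_le (continuous_id.inner continuous_const) continuous_const

lemma polar_convex (X : Set E) : Convex ℝ (polarSet X) := by
  intro y hy z hz a b ha hb hab
  intro x hx
  have h1 := hy x hx
  have h2 := hz x hx
  rw [inner_add_left, real_inner_smul_left, real_inner_smul_left]
  nlinarith

lemma polar_bounded {X : Set E} {ε : ℝ} (hε : 0 < ε) (hball : Metric.ball 0 ε ⊆ X) :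
    polarSet X ⊆ Metric.closedBall 0 (2 / ε) := by
  intro p hp
  rw [Metric.mem_closedBall, dist_zero_right]
  by_contra h
  push_neg at h
  have hppos : 0 < ‖p‖ := lt_trans (by positivity) h
  set x : E := (ε / 2) • ‖p‖⁻¹ • p with hxdef
  have hxX : x ∈ X := by
    apply hball
    rw [mem_ball_zero_iff, hxdef, norm_smul, norm_smul, norm_inv, norm_norm,
      Real.norm_eq_abs, abs_of_pos (by linarith : (0:ℝ) < ε / 2),
      inv_mul_cancel₀ hppos.ne', mul_one]
    linarith
  have hle := hp x hxX
  rw [hxdef, real_inner_smul_right, real_inner_smul_right,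
    real_inner_self_eq_norm_sq] at hle
  have hinv : ‖p‖⁻¹ * ‖p‖ ^ 2 = ‖p‖ := by
    field_simp
  rw [hinv] at hle
  have : 2 / ε * ε = 2 := by field_simp
  nlinarith

lemma polar_isCompact [ProperSpace E] {X : Set E} {ε : ℝ} (hε : 0 < ε)
    (hball : Metric.ball 0 ε ⊆ X) : IsCompact (polarSet X) :=
  Metric.isCompact_of_isClosed_isBounded (polar_isClosed X)
    (Metric.isBounded_closedBall.subset (polar_bounded hε hball))

lemma ball_subset_polar {X : Set E} {R : ℝ} (hR : 0 < R)
    (hX : X ⊆ Metric.closedBall 0 R) : Metric.ball 0 R⁻¹ ⊆ polarSet X := by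
  intro p hp x hx
  have h1 : ‖p‖ < R⁻¹ := mem_ball_zero_iff.mp hp
  have h2 : ‖x‖ ≤ R := by
    have := hX hx
    rwa [Metric.mem_closedBall, dist_zero_right] at this
  have h3 : (inner ℝ p x : ℝ) ≤ ‖p‖ * ‖x‖ := real_inner_le_norm p x
  have hRinv : R⁻¹ * R = 1 := inv_mul_cancel₀ hR.ne'
  nlinarith [norm_nonneg p, norm_nonneg x]

/-- The unified key lemma: under suitable hypotheses the set defining the gauge of `X`
is the closed ray above the support function of the dual set `D`. -/
lemma key_set_eq {X D : Set E} (hD : IsCompact D) {ε : ℝ} (hε : 0 < ε)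
    (hball : Metric.ball 0 ε ⊆ D) (hXne : X.Nonempty) (y : E)
    (hiff : ∀ η : ℝ, 0 < η → (y ∈ η • X ↔ ∀ p ∈ D, (inner ℝ p y : ℝ) ≤ η)) :
    {η : ℝ | 0 ≤ η ∧ y ∈ η • X} = Set.Ici (supf D y) := by
  have h0D : (0 : E) ∈ D := hball (Metric.mem_ball_self hε)
  have hbdd := bddAbove_inner_image hD y
  have hne : ((fun p => (inner ℝ p y : ℝ)) '' D).Nonempty := ⟨_, ⟨0, h0D, rfl⟩⟩
  have hge0 : 0 ≤ supf D y := le_csSup hbdd ⟨0, h0D, by simp [inner_zero_left]⟩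
  have hzero : supf D y ≤ 0 → y = 0 := by
    intro h
    by_contra hy
    have hynorm : 0 < ‖y‖ := norm_pos_iff.mpr hy
    set p : E := (ε / 2) • ‖y‖⁻¹ • y with hpdef
    have hpD : p ∈ D := by
      apply hball
      rw [mem_ball_zero_iff, hpdef, norm_smul, norm_smul, norm_inv, norm_norm,
        Real.norm_eq_abs, abs_of_pos (by linarith : (0:ℝ) < ε / 2),
        inv_mul_cancel₀ hynorm.ne', mul_one]
      linarith
    have h1 : (inner ℝ p y : ℝ) ≤ supf D y := le_csSup hbdd ⟨p, hpD, rfl⟩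
    rw [hpdef, real_inner_smul_left, real_inner_smul_left,
      real_inner_self_eq_norm_sq] at h1
    have hinv : ‖y‖⁻¹ * ‖y‖ ^ 2 = ‖y‖ := by field_simp
    rw [hinv] at h1
    nlinarith
  ext η
  simp only [Set.mem_setOf_eq, Set.mem_Ici]
  constructor
  · rintro ⟨h0, hmem⟩
    rcases h0.lt_or_eq with hpos | hzeq
    · refine csSup_le hne ?_
      rintro _ ⟨p, hp, rfl⟩
      exact (hiff η hpos).1 hmem p hp
    · rw [← hzeq] at hmem ⊢
      rw [Set.zero_smul_set hXne] at hmem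
      have hy0 : y = 0 := hmem
      refine csSup_le hne ?_
      rintro _ ⟨p, hp, rfl⟩
      simp [hy0, inner_zero_right]
  · intro h
    have hη0 : 0 ≤ η := hge0.trans h
    refine ⟨hη0, ?_⟩
    rcases hη0.lt_or_eq with hpos | hzeq
    · exact (hiff η hpos).2 fun p hp => le_trans (le_csSup hbdd ⟨p, hp, rfl⟩) h
    · rw [← hzeq] at h ⊢
      have hy0 : y = 0 := hzero h
      rw [Set.zero_smul_set hXne, hy0]
      rfl

lemma mgauge_eq_supf {X D : Set E} (hD : IsCompact D) {ε : ℝ} (hε : 0 < ε)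
    (hball : Metric.ball 0 ε ⊆ D) (hXne : X.Nonempty) (y : E)
    (hiff : ∀ η : ℝ, 0 < η → (y ∈ η • X ↔ ∀ p ∈ D, (inner ℝ p y : ℝ) ≤ η)) :
    mgauge X y = supf D y := by
  rw [mgauge, key_set_eq hD hε hball hXne y hiff, csInf_Ici]

lemma mgauge_attained {X D : Set E} (hD : IsCompact D) {ε : ℝ} (hε : 0 < ε)
    (hball : Metric.ball 0 ε ⊆ D) (hXne : X.Nonempty) (y : E)
    (hiff : ∀ η : ℝ, 0 < η → (y ∈ η • X ↔ ∀ p ∈ D, (inner ℝ p y : ℝ) ≤ η)) :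
    0 ≤ mgauge X y ∧ y ∈ mgauge X y • X := by
  have h1 := mgauge_eq_supf hD hε hball hXne y hiff
  have h2 := key_set_eq hD hε hball hXne y hiff
  have : mgauge X y ∈ {η : ℝ | 0 ≤ η ∧ y ∈ η • X} := by
    rw [h2, Set.mem_Ici, h1]
  exact this

/-- Easy case: gauge of a polar set. -/
lemma hiff_polar (S : Set E) (y : E) (η : ℝ) (hη : 0 < η) :
    y ∈ η • polarSet S ↔ ∀ p ∈ S, (inner ℝ p y : ℝ) ≤ η := by
  rw [Set.mem_smul_set_iff_inv_smul_mem₀ hη.ne']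
  constructor
  · intro h p hp
    have h1 := h p hp
    rw [real_inner_smul_left, real_inner_comm] at h1
    nlinarith [mul_le_mul_of_nonneg_left h1 hη.le, mul_inv_cancel₀ hη.ne']
  · intro h x hx
    have h1 := h x hx
    rw [real_inner_smul_left, real_inner_comm]
    nlinarith [mul_inv_cancel₀ hη.ne']

/-- Hard case (bipolar direction, via Hahn–Banach separation). -/
lemma hiff_hb [CompleteSpace E] {X : Set E} (hXc : IsClosed X) (hXconv : Convex ℝ X)
    (h0X : (0 : E) ∈ X) (y : E) (η : ℝ) (hη : 0 < η) :
    y ∈ η • X ↔ ∀ p ∈ polarSet X, (inner ℝ p y : ℝ) ≤ η := by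
  rw [Set.mem_smul_set_iff_inv_smul_mem₀ hη.ne']
  constructor
  · intro h p hp
    have h1 := hp (η⁻¹ • y) h
    rw [real_inner_smul_right] at h1
    nlinarith [mul_le_mul_of_nonneg_left h1 hη.le, mul_inv_cancel₀ hη.ne']
  · intro h
    by_contra hmem
    obtain ⟨f, u, hfa, hfx⟩ := geometric_hahn_banach_closed_point hXconv hXc hmem
    have hu : 0 < u := by have := hfa 0 h0X; simpa using this
    set p : E := u⁻¹ • (InnerProductSpace.toDual ℝ E).symm f with hpdef
    have hpapp : ∀ z : E, (inner ℝ p z : ℝ) = u⁻¹ * f z := by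
      intro z
      rw [hpdef, real_inner_smul_left, InnerProductSpace.toDual_symm_apply]
    have hpX : p ∈ polarSet X := by
      intro x hx
      rw [hpapp]
      have := hfa x hx
      rw [show (1:ℝ) = u⁻¹ * u by rw [inv_mul_cancel₀ hu.ne']]
      exact mul_le_mul_of_nonneg_left this.le (by positivity)
    have hle := h p hpX
    rw [hpapp] at hle
    have hfy : f y = η * f (η⁻¹ • y) := by
      conv_lhs => rw [show y = η • η⁻¹ • y by rw [smul_smul, mul_inv_cancel₀ hη.ne', one_smul]]
      rw [_root_.map_smul, smul_eq_mul]
    rw [hfy] at hle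
    have h2 : u < f (η⁻¹ • y) := hfx
    have h3 : u⁻¹ * (η * u) < u⁻¹ * (η * f (η⁻¹ • y)) := by
      apply mul_lt_mul_of_pos_left _ (by positivity)
      exact mul_lt_mul_of_pos_left h2 hη
    rw [show u⁻¹ * (η * u) = η by field_simp] at h3
    linarith

lemma supf_add {S T : Set E} (hS : IsCompact S) (hT : IsCompact T)
    (hSne : S.Nonempty) (hTne : T.Nonempty) (y : E) :
    supf (S + T) y = supf S y + supf T y := by
  have hbS := bddAbove_inner_image hS y
  have hbT := bddAbove_inner_image hT y
  have hbST := bddAbove_inner_image (hS.add hT) y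
  apply le_antisymm
  · apply csSup_le ((hSne.add hTne).image _)
    rintro _ ⟨q, hq, rfl⟩
    obtain ⟨a, ha, b, hb, rfl⟩ := Set.mem_add.mp hq
    show (inner ℝ (a + b) y : ℝ) ≤ supf S y + supf T y
    rw [inner_add_left]
    exact add_le_add (le_csSup hbS ⟨a, ha, rfl⟩) (le_csSup hbT ⟨b, hb, rfl⟩)
  · have key : ∀ a ∈ S, ∀ b ∈ T, (inner ℝ a y : ℝ) + inner ℝ b y ≤ supf (S + T) y := by
      intro a ha b hb
      rw [← inner_add_left]
      exact le_csSup hbST ⟨a + b, Set.add_mem_add ha hb, rfl⟩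
    have h1 : ∀ b ∈ T, supf S y ≤ supf (S + T) y - inner ℝ b y := by
      intro b hb
      apply csSup_le (hSne.image _)
      rintro _ ⟨a, ha, rfl⟩
      linarith [key a ha b hb]
    have h2 : supf T y ≤ supf (S + T) y - supf S y := by
      apply csSup_le (hTne.image _)
      rintro _ ⟨b, hb, rfl⟩
      linarith [h1 b hb]
    linarith

lemma supf_image {F : Type*} [NormedAddCommGroup F] [InnerProductSpace ℝ F]
    (T : Set F) (L : F → E) (Ladj : E → F)
    (h : ∀ q w, (inner ℝ (L q) w : ℝ) = inner ℝ q (Ladj w)) (w : E) :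
    supf (L '' T) w = supf T (Ladj w) := by
  unfold supf
  rw [Set.image_image]
  simp only [h]

lemma inner_Mtr (A : Matrix (Fin n) (Fin n) ℝ) (B : Matrix (Fin n) (Fin m) ℝ)
    (q : Rsp n) (w : Rsp2 n m) :
    (inner ℝ (Mtr A B q) w : ℝ) = inner ℝ q (Mfwd A B w) := by
  rw [Mfwd, WithLp.prod_inner_apply, inner_add_right]
  congr 1
  · show (inner ℝ (Matrix.toEuclideanLin Aᵀ q) w.ofLp.1 : ℝ) = _
    rw [← Matrix.conjTranspose_eq_transpose_of_trivial,
      Matrix.toEuclideanLin_conjTranspose_eq_adjoint, LinearMap.adjoint_inner_left]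
  · show (inner ℝ (Matrix.toEuclideanLin Bᵀ q) w.ofLp.2 : ℝ) = _
    rw [← Matrix.conjTranspose_eq_transpose_of_trivial,
      Matrix.toEuclideanLin_conjTranspose_eq_adjoint, LinearMap.adjoint_inner_left]

lemma cont_Mtr (A : Matrix (Fin n) (Fin n) ℝ) (B : Matrix (Fin n) (Fin m) ℝ) :
    Continuous (Mtr A B : Rsp n → Rsp2 n m) := by
  have h1 : Continuous fun p : Rsp n =>
      ((Matrix.toEuclideanLin Aᵀ p, Matrix.toEuclideanLin Bᵀ p) : Rsp n × Rsp m) :=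
    ((Matrix.toEuclideanLin Aᵀ).continuous_of_finiteDimensional).prodMk
      ((Matrix.toEuclideanLin Bᵀ).continuous_of_finiteDimensional)
  exact ((WithLp.prodContinuousLinearEquiv 2 ℝ (Rsp n) (Rsp m)).symm.continuous).comp h1

lemma Mtr_zero (A : Matrix (Fin n) (Fin n) ℝ) (B : Matrix (Fin n) (Fin m) ℝ) :
    Mtr A B 0 = 0 := by
  unfold Mtr
  simp only [map_zero]
  rfl

lemma cont_Pxproj : Continuous (Pxproj : Rsp2 n m → Rsp n) :=
  continuous_fst.comp (WithLp.prodContinuousLinearEquiv 2 ℝ (Rsp n) (Rsp m)).continuous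

lemma Pxproj_linear : IsLinearMap ℝ (Pxproj : Rsp2 n m → Rsp n) :=
  ⟨fun _ _ => rfl, fun _ _ => rfl⟩

lemma norm_pair_zero (x : Rsp n) :
    ‖(WithLp.equiv 2 (Rsp n × Rsp m)).symm (x, 0)‖ = ‖x‖ := by
  have h := WithLp.prod_norm_eq_of_L2 ((WithLp.equiv 2 (Rsp n × Rsp m)).symm (x, 0))
  refine h.trans ?_
  simp [Real.sqrt_sq (norm_nonneg x)]

end StmtAux

open StmtAux in
/-- for every x the infimum over u of γ(𝒞,(x,u)) + γ(𝒫, Ax+Bu) is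
attained and equals γ(𝒫⁺, x), where 𝒫⁺ = P_x(𝒞* ⊕ Mᵀ𝒫*)*. -/
theorem stmt_2 (n m : ℕ) (C : Set (Rsp2 n m)) (P : Set (Rsp n))
    (hC : IsProperCSet C) (hP : IsProperCSet P)
    (A : Matrix (Fin n) (Fin n) ℝ) (B : Matrix (Fin n) (Fin m) ℝ)
    (Tplus : Set (Rsp2 n m)) (hT : Tplus = polarSet (polarSet C + Mtr A B '' polarSet P))
    (Pplus : Set (Rsp n)) (hPp : Pplus = Pxproj '' Tplus) :
    ∀ x : Rsp n, ∃ u : Rsp m,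
      mgauge C (WithLp.toLp 2 (x, u) : Rsp2 n m) + mgauge P (Mfwd A B (WithLp.toLp 2 (x, u))) = mgauge Pplus x ∧
      ∀ v : Rsp m,
        mgauge Pplus x ≤ mgauge C (WithLp.toLp 2 (x, v) : Rsp2 n m) + mgauge P (Mfwd A B (WithLp.toLp 2 (x, v))) := by
  obtain ⟨⟨hCcomp, hCconv, hC0⟩, hCint⟩ := hC
  obtain ⟨⟨hPcomp, hPconv, hP0⟩, hPint⟩ := hP
  obtain ⟨εC, hεC, hballC⟩ := Metric.mem_nhds_iff.mp (mem_interior_iff_mem_nhds.mp hCint)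
  obtain ⟨εP, hεP, hballP⟩ := Metric.mem_nhds_iff.mp (mem_interior_iff_mem_nhds.mp hPint)
  obtain ⟨RC, hRC, hCsub⟩ := hCcomp.isBounded.subset_closedBall_lt 0 0
  obtain ⟨RP, hRP, hPsub⟩ := hPcomp.isBounded.subset_closedBall_lt 0 0
  have hDCcomp : IsCompact (polarSet C) := polar_isCompact hεC hballC
  have hDPcomp : IsCompact (polarSet P) := polar_isCompact hεP hballP
  have hDCball : Metric.ball 0 RC⁻¹ ⊆ polarSet C := ball_subset_polar hRC hCsub
  have hDPball : Metric.ball 0 RP⁻¹ ⊆ polarSet P := ball_subset_polar hRP hPsub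
  set S : Set (Rsp2 n m) := polarSet C + Mtr A B '' polarSet P with hSdef
  have hScomp : IsCompact S := hDCcomp.add (hDPcomp.image (cont_Mtr A B))
  have hSball : Metric.ball 0 RC⁻¹ ⊆ S := by
    intro c hc
    have h0 : (0 : Rsp2 n m) ∈ Mtr A B '' polarSet P :=
      ⟨0, zero_mem_polar P, Mtr_zero A B⟩
    have := Set.add_mem_add (hDCball hc) h0
    rwa [add_zero] at this
  have hRCinv : (0:ℝ) < RC⁻¹ := inv_pos.mpr hRC
  have hSne : (polarSet S).Nonempty := ⟨0, zero_mem_polar S⟩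
  -- the gauge identity on Tplus
  have hmgT : ∀ w : Rsp2 n m, mgauge Tplus w = mgauge C w + mgauge P (Mfwd A B w) := by
    intro w
    have h1 : mgauge Tplus w = supf S w := by
      rw [hT]
      exact mgauge_eq_supf hScomp hRCinv hSball hSne w (fun η hη => hiff_polar S w η hη)
    have h2 : supf S w = supf (polarSet C) w + supf (Mtr A B '' polarSet P) w :=
      supf_add hDCcomp (hDPcomp.image (cont_Mtr A B)) ⟨0, zero_mem_polar C⟩
        (Set.Nonempty.image (Mtr A B) ⟨0, zero_mem_polar P⟩) w
    have h3 : supf (Mtr A B '' polarSet P) w = supf (polarSet P) (Mfwd A B w) :=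
      supf_image (polarSet P) (Mtr A B) (Mfwd A B) (inner_Mtr A B) w
    have h4 : mgauge C w = supf (polarSet C) w :=
      mgauge_eq_supf hDCcomp hRCinv hDCball ⟨0, hC0⟩ w
        (fun η hη => hiff_hb hCcomp.isClosed hCconv hC0 w η hη)
    have h5 : mgauge P (Mfwd A B w) = supf (polarSet P) (Mfwd A B w) :=
      mgauge_eq_supf hDPcomp (inv_pos.mpr hRP) hDPball ⟨0, hP0⟩ (Mfwd A B w)
        (fun η hη => hiff_hb hPcomp.isClosed hPconv hP0 (Mfwd A B w) η hη)
    rw [h1, h2, h3, h4, h5]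
  -- structure of Tplus and Pplus
  have hTcomp : IsCompact Tplus := by
    rw [hT]; exact polar_isCompact hRCinv hSball
  obtain ⟨RS, hRS, hSsub⟩ := hScomp.isBounded.subset_closedBall_lt 0 0
  have hTball : Metric.ball 0 RS⁻¹ ⊆ Tplus := by
    rw [hT]; exact ball_subset_polar hRS hSsub
  have hTconv : Convex ℝ Tplus := by rw [hT]; exact polar_convex S
  have hPpcomp : IsCompact Pplus := by rw [hPp]; exact hTcomp.image cont_Pxproj
  have hPpconv : Convex ℝ Pplus := by
    rw [hPp]; exact hTconv.is_linear_image Pxproj_linear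
  have hRSinv : (0:ℝ) < RS⁻¹ := inv_pos.mpr hRS
  have hPpball : Metric.ball 0 RS⁻¹ ⊆ Pplus := by
    rw [hPp]
    intro x hx
    refine ⟨(WithLp.equiv 2 (Rsp n × Rsp m)).symm (x, 0), hTball ?_, rfl⟩
    rw [mem_ball_zero_iff, norm_pair_zero]
    exact mem_ball_zero_iff.mp hx
  have hPp0 : (0 : Rsp n) ∈ Pplus := hPpball (Metric.mem_ball_self hRSinv)
  obtain ⟨RPp, hRPp, hPpsub⟩ := hPpcomp.isBounded.subset_closedBall_lt 0 0
  have hPpolarcomp : IsCompact (polarSet Pplus) := polar_isCompact hRSinv hPpball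
  have hPpolarball : Metric.ball 0 RPp⁻¹ ⊆ polarSet Pplus := ball_subset_polar hRPp hPpsub
  have hPpne : Pplus.Nonempty := ⟨0, hPp0⟩
  have hTSne : Tplus.Nonempty := ⟨0, by rw [hT]; exact zero_mem_polar S⟩
  intro x
  have hiffPp : ∀ η : ℝ, 0 < η →
      (x ∈ η • Pplus ↔ ∀ p ∈ polarSet Pplus, (inner ℝ p x : ℝ) ≤ η) :=
    fun η hη => hiff_hb hPpcomp.isClosed hPpconv hPp0 x η hη
  have hkeyPp : {η : ℝ | 0 ≤ η ∧ x ∈ η • Pplus} = Set.Ici (supf (polarSet Pplus) x) :=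
    key_set_eq hPpolarcomp (inv_pos.mpr hRPp) hPpolarball hPpne x hiffPp
  have hreq : mgauge Pplus x = supf (polarSet Pplus) x :=
    mgauge_eq_supf hPpolarcomp (inv_pos.mpr hRPp) hPpolarball hPpne x hiffPp
  have hAP : {η : ℝ | 0 ≤ η ∧ x ∈ η • Pplus} = Set.Ici (mgauge Pplus x) := by
    rw [hkeyPp, hreq]
  obtain ⟨hr0, hxr⟩ :=
    mgauge_attained hPpolarcomp (inv_pos.mpr hRPp) hPpolarball hPpne x hiffPp
  -- lower bound
  have hlow : ∀ v : Rsp m,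
      mgauge Pplus x ≤ mgauge C (WithLp.toLp 2 (x, v) : Rsp2 n m) + mgauge P (Mfwd A B (WithLp.toLp 2 (x, v))) := by
    intro v
    rw [← hmgT]
    have hatt := mgauge_attained hScomp hRCinv hSball hSne (WithLp.toLp 2 (x, v) : Rsp2 n m)
      (fun η hη => hiff_polar S _ η hη)
    rw [← hT] at hatt
    obtain ⟨hg0, hgmem⟩ := hatt
    obtain ⟨w, hw, hwe⟩ := hgmem
    have hxg : x ∈ mgauge Tplus (WithLp.toLp 2 (x, v) : Rsp2 n m) • Pplus := by
      rw [hPp]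
      have hxeq : x = mgauge Tplus (WithLp.toLp 2 (x, v) : Rsp2 n m) • Pxproj w :=
        (congrArg Pxproj hwe).symm
      have hmem2 := Set.smul_mem_smul_set (b := Pxproj w)
        (a := mgauge Tplus (WithLp.toLp 2 (x, v) : Rsp2 n m)) (Set.mem_image_of_mem Pxproj hw)
      rwa [← hxeq] at hmem2
    have : mgauge Tplus (WithLp.toLp 2 (x, v) : Rsp2 n m) ∈ Set.Ici (mgauge Pplus x) := by
      rw [← hAP]; exact ⟨hg0, hxg⟩
    exact this
  -- the minimizer
  obtain ⟨z, hz, hxz⟩ := hxr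
  rw [hPp] at hz
  obtain ⟨w0, hw0, rfl⟩ := hz
  refine ⟨mgauge Pplus x • w0.ofLp.2, ?_, hlow⟩
  have hup : mgauge Tplus (WithLp.toLp 2 (x, mgauge Pplus x • w0.ofLp.2) : Rsp2 n m) ≤ mgauge Pplus x := by
    apply csInf_le
    · exact ⟨0, fun η hη => hη.1⟩
    · refine ⟨hr0, ?_⟩
      have hxw : x = mgauge Pplus x • w0.ofLp.1 := hxz.symm
      have hpair : (WithLp.toLp 2 (x, mgauge Pplus x • w0.ofLp.2) : Rsp2 n m) = mgauge Pplus x • w0 :=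
        WithLp.ofLp_injective 2 (Prod.ext hxw rfl)
      rw [hpair]
      exact Set.smul_mem_smul_set hw0
  have h2 : mgauge C (WithLp.toLp 2 (x, mgauge Pplus x • w0.ofLp.2) : Rsp2 n m) +
      mgauge P (Mfwd A B (WithLp.toLp 2 (x, mgauge Pplus x • w0.ofLp.2))) ≤ mgauge Pplus x := by
    rw [← hmgT]; exact hup
  exact le_antisymm h2 (hlow _)
end
end

section
/- Let 𝒞 ⊆ ℝ^{n+m} and 𝒫 ⊆ ℝⁿ be proper C-sets and let A ∈ ℝ^{n×n}, B ∈ ℝ^{n×m}. Define 𝒯⁺ = (𝒞* ⊕ Mᵀ𝒫*)* and 𝒫⁺ = P_x𝒯⁺. Then for every x ∈ ℝⁿ, the set of minimizers u⁺(x) = {u ∈ ℝᵐ : γ(𝒞,(x,u)) + γ(𝒫, Ax+Bu) = min_v [γ(𝒞,(x,v)) + γ(𝒫, Ax+Bv)]} equals {u ∈ ℝᵐ : (x,u) ∈ γ(𝒫⁺,x)·𝒯⁺}, where γ(𝒫⁺,x)·𝒯⁺ denotes the scalar multiple of 𝒯⁺ by γ(𝒫⁺,x). -/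
open Pointwise Filter Topology Matrix

noncomputable section
set_option linter.unusedSectionVars false

variable {n m : ℕ}

/-! ### Auxiliary general lemmas about `mgauge` and `polarSet` -/

section GaugeLemmas

variable {E : Type*} [NormedAddCommGroup E] [InnerProductSpace ℝ E] [CompleteSpace E]
variable {X : Set E} {w y : E} {η c g : ℝ}

lemma mgauge_nonneg (X : Set E) (w : E) : 0 ≤ mgauge X w :=
  Real.sInf_nonneg fun _ h => h.1

lemma gaugeSet_bddBelow (X : Set E) (w : E) : BddBelow {η : ℝ | 0 ≤ η ∧ w ∈ η • X} :=
  ⟨0, fun _ h => h.1⟩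

lemma mgauge_le (hη : 0 ≤ η) (hw : w ∈ η • X) : mgauge X w ≤ η :=
  csInf_le (gaugeSet_bddBelow X w) ⟨hη, hw⟩

lemma gaugeSet_nonempty (hX : (0 : E) ∈ interior X) (w : E) :
    Set.Nonempty {η : ℝ | 0 ≤ η ∧ w ∈ η • X} := by
  obtain ⟨ε, hε, hball⟩ := Metric.mem_nhds_iff.1 (mem_interior_iff_mem_nhds.1 hX)
  set η : ℝ := ‖w‖ / ε + 1 with hηdef
  have hη : 0 < η := by positivity
  refine ⟨η, hη.le, (Set.mem_smul_set_iff_inv_smul_mem₀ hη.ne' _ _).2 (hball ?_)⟩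
  simp only [Metric.mem_ball, dist_zero_right, norm_smul, norm_inv, Real.norm_eq_abs,
    abs_of_pos hη]
  rw [inv_mul_lt_iff₀ hη, hηdef]
  have : ε * (‖w‖ / ε) = ‖w‖ := by field_simp
  nlinarith [norm_nonneg w]

lemma mgauge_zero (h0 : (0 : E) ∈ X) : mgauge X 0 = 0 :=
  le_antisymm (mgauge_le le_rfl ⟨0, h0, smul_zero 0⟩) (mgauge_nonneg X 0)

lemma inner_le_mgauge (hX : (0 : E) ∈ interior X) (hy : y ∈ polarSet X) (w : E) :
    inner ℝ y w ≤ mgauge X w := by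
  refine le_csInf (gaugeSet_nonempty hX w) ?_
  rintro η ⟨hη, x, hx, rfl⟩
  rw [real_inner_smul_right]
  exact mul_le_of_le_one_right hη (hy x hx)

lemma eq_zero_of_mgauge_eq_zero (hcomp : IsCompact X) (hX : (0 : E) ∈ interior X)
    (hw : mgauge X w = 0) : w = 0 := by
  obtain ⟨R, hR⟩ := hcomp.isBounded.subset_closedBall 0
  have hR0 : 0 ≤ R := by
    have := hR (interior_subset hX); simpa using this
  have key : ∀ ε : ℝ, 0 < ε → ‖w‖ ≤ ε := by
    intro ε hε
    have hlt : sInf {η : ℝ | 0 ≤ η ∧ w ∈ η • X} < ε / (R + 1) := by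
      rw [← mgauge] at *; rw [hw]; positivity
    obtain ⟨η, ⟨hη0, x, hx, rfl⟩, hηε⟩ :=
      exists_lt_of_csInf_lt (gaugeSet_nonempty hX w) hlt
    have hxR : ‖x‖ ≤ R := by simpa [Metric.mem_closedBall, dist_zero_right] using hR hx
    have : ‖η • x‖ ≤ η * (R + 1) := by
      rw [norm_smul, Real.norm_eq_abs, abs_of_nonneg hη0]
      nlinarith
    calc ‖η • x‖ ≤ η * (R + 1) := this
      _ ≤ ε / (R + 1) * (R + 1) := by nlinarith
      _ = ε := by field_simp
  have : ‖w‖ ≤ 0 := by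
    by_contra h
    push_neg at h
    have := key (‖w‖ / 2) (by linarith)
    linarith
  exact norm_le_zero_iff.1 this

lemma exists_polar_gt (hcomp : IsCompact X) (hconv : Convex ℝ X) (h0 : (0 : E) ∈ X)
    (hg : g < mgauge X w) : ∃ y ∈ polarSet X, g < inner ℝ y w := by
  rcases lt_or_ge g 0 with hg0 | hg0
  · exact ⟨0, fun x _ => by simp, by simpa using hg0⟩
  have hnot : w ∉ g • X := fun h => absurd (mgauge_le hg0 h) (not_le.2 hg)
  obtain ⟨φ, s, hs1, hs2⟩ :=
    geometric_hahn_banach_closed_point ((hconv.smul g)) ((hcomp.smul g).isClosed) hnot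
  obtain ⟨x₀, hx₀X, hx₀max⟩ := hcomp.exists_isMaxOn ⟨0, h0⟩ φ.continuous.continuousOn
  set σ : ℝ := φ x₀ with hσdef
  have hσ0 : 0 ≤ σ := by simpa using hx₀max h0
  have hgs : g * σ < s := by
    have := hs1 (g • x₀) ⟨x₀, hx₀X, rfl⟩
    simpa [smul_eq_mul] using this
  set y0 : E := (InnerProductSpace.toDual ℝ E).symm φ with hy0
  have hy0ap : ∀ z : E, inner ℝ y0 z = φ z := fun z => InnerProductSpace.toDual_symm_apply
  rcases eq_or_lt_of_le hσ0 with hσeq | hσpos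
  · have hφw : 0 < φ w := by
      have := hs2; rw [← hσeq] at hgs; nlinarith
    refine ⟨((g + 1) / φ w) • y0, ?_, ?_⟩
    · intro x hx
      rw [real_inner_smul_left, hy0ap]
      have hφx : φ x ≤ 0 := by rw [hσeq]; exact hx₀max hx
      have : (g + 1) / φ w * φ x ≤ 0 :=
        mul_nonpos_of_nonneg_of_nonpos (by positivity) hφx
      linarith
    · rw [real_inner_smul_left, hy0ap, div_mul_cancel₀ _ hφw.ne']
      linarith
  · refine ⟨σ⁻¹ • y0, ?_, ?_⟩
    · intro x hx
      rw [real_inner_smul_left, hy0ap, inv_mul_le_iff₀ hσpos, mul_one]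
      exact hx₀max hx
    · rw [real_inner_smul_left, hy0ap]
      have hsw : s < φ w := hs2
      rw [lt_inv_mul_iff₀ hσpos]
      calc σ * g = g * σ := mul_comm _ _
        _ < s := hgs
        _ < φ w := hsw

lemma mgauge_smul_le (hX : (0 : E) ∈ interior X) (hc : 0 < c) (w : E) :
    mgauge X (c • w) ≤ c * mgauge X w := by
  have h1 : c⁻¹ * mgauge X (c • w) ≤ mgauge X w := by
    refine le_csInf (gaugeSet_nonempty hX w) ?_
    rintro η ⟨hη, hw⟩
    rw [inv_mul_le_iff₀ hc]
    exact mgauge_le (by positivity) (by rw [mul_smul]; exact Set.smul_mem_smul_set hw)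
  calc mgauge X (c • w) = c * (c⁻¹ * mgauge X (c • w)) := by field_simp
    _ ≤ c * mgauge X w := by nlinarith [mgauge_nonneg X (c • w)]

lemma mgauge_smul (hX : (0 : E) ∈ interior X) (hc : 0 < c) (w : E) :
    mgauge X (c • w) = c * mgauge X w := by
  refine le_antisymm (mgauge_smul_le hX hc w) ?_
  have := mgauge_smul_le hX (inv_pos.2 hc) (c • w)
  rw [inv_smul_smul₀ hc.ne'] at this
  calc c * mgauge X w ≤ c * (c⁻¹ * mgauge X (c • w)) := by nlinarith
    _ = mgauge X (c • w) := by field_simp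

end GaugeLemmas

/-! ### Specialized lemmas -/

lemma Mfwd_smul (A : Matrix (Fin n) (Fin n) ℝ) (B : Matrix (Fin n) (Fin m) ℝ)
    (c : ℝ) (w : Rsp2 n m) : Mfwd A B (c • w) = c • Mfwd A B w := by
  simp [Mfwd, smul_add]

lemma Mfwd_zero (A : Matrix (Fin n) (Fin n) ℝ) (B : Matrix (Fin n) (Fin m) ℝ) :
    Mfwd A B (0 : Rsp2 n m) = 0 := by
  show Matrix.toEuclideanLin A (0 : Rsp2 n m).ofLp.1 + Matrix.toEuclideanLin B (0 : Rsp2 n m).ofLp.2 = 0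
  simp

lemma inner_Mtr (A : Matrix (Fin n) (Fin n) ℝ) (B : Matrix (Fin n) (Fin m) ℝ)
    (q : Rsp n) (w : Rsp2 n m) :
    inner (𝕜 := ℝ) (Mtr A B q) w = inner (𝕜 := ℝ) q (Mfwd A B w) := by
  rw [WithLp.prod_inner_apply]
  have hA : Aᵀ = Aᴴ := by ext i j; simp [Matrix.conjTranspose]
  have hB : Bᵀ = Bᴴ := by ext i j; simp [Matrix.conjTranspose]
  show inner (𝕜 := ℝ) (Matrix.toEuclideanLin Aᵀ q) w.ofLp.1
      + inner (𝕜 := ℝ) (Matrix.toEuclideanLin Bᵀ q) w.ofLp.2 = _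
  rw [hA, hB, Matrix.toEuclideanLin_conjTranspose_eq_adjoint,
    Matrix.toEuclideanLin_conjTranspose_eq_adjoint, LinearMap.adjoint_inner_left,
    LinearMap.adjoint_inner_left, Mfwd, inner_add_right]

lemma mem_Tplus_iff {C : Set (Rsp2 n m)} {P : Set (Rsp n)}
    (hC : IsProperCSet C) (hP : IsProperCSet P)
    (A : Matrix (Fin n) (Fin n) ℝ) (B : Matrix (Fin n) (Fin m) ℝ) (w : Rsp2 n m) :
    w ∈ polarSet (polarSet C + Mtr A B '' polarSet P) ↔
      mgauge C w + mgauge P (Mfwd A B w) ≤ 1 := by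
  constructor
  · intro hw
    by_contra hlt
    push_neg at hlt
    set δ : ℝ := (mgauge C w + mgauge P (Mfwd A B w) - 1) / 2 with hδ
    have hδpos : 0 < δ := by simp only [hδ]; linarith
    obtain ⟨y, hy, hy2⟩ := exists_polar_gt hC.1.1 hC.1.2.1 hC.1.2.2
      (show mgauge C w - δ < mgauge C w by linarith)
    obtain ⟨q, hq, hq2⟩ := exists_polar_gt hP.1.1 hP.1.2.1 hP.1.2.2
      (show mgauge P (Mfwd A B w) - δ < mgauge P (Mfwd A B w) by linarith)
    have hmem : y + Mtr A B q ∈ polarSet C + Mtr A B '' polarSet P :=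
      Set.add_mem_add hy ⟨q, hq, rfl⟩
    have h1 := hw _ hmem
    rw [inner_add_right, real_inner_comm y w, real_inner_comm (Mtr A B q) w, inner_Mtr] at h1
    simp only [hδ] at hy2 hq2
    linarith
  · intro hf z hz
    obtain ⟨a, ha, b, ⟨q, hq, rfl⟩, rfl⟩ := Set.mem_add.1 hz
    rw [inner_add_right, real_inner_comm a w, real_inner_comm (Mtr A B q) w, inner_Mtr]
    have h1 := inner_le_mgauge hC.2 ha w
    have h2 := inner_le_mgauge hP.2 hq (Mfwd A B w)
    linarith

lemma zero_mem_Tplus {C : Set (Rsp2 n m)} {P : Set (Rsp n)}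
    (A : Matrix (Fin n) (Fin n) ℝ) (B : Matrix (Fin n) (Fin m) ℝ) :
    (0 : Rsp2 n m) ∈ polarSet (polarSet C + Mtr A B '' polarSet P) := by
  intro z _
  simp

lemma mem_smul_Tplus_iff {C : Set (Rsp2 n m)} {P : Set (Rsp n)}
    (hC : IsProperCSet C) (hP : IsProperCSet P)
    (A : Matrix (Fin n) (Fin n) ℝ) (B : Matrix (Fin n) (Fin m) ℝ) {η : ℝ} (hη : 0 ≤ η)
    (w : Rsp2 n m) :
    w ∈ η • polarSet (polarSet C + Mtr A B '' polarSet P) ↔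
      mgauge C w + mgauge P (Mfwd A B w) ≤ η := by
  rcases hη.eq_or_lt with heq | hpos
  · subst heq
    rw [Set.zero_smul_set ⟨0, zero_mem_Tplus A B⟩]
    constructor
    · intro hw
      have hw0 : w = 0 := by simpa using hw
      subst hw0
      rw [mgauge_zero hC.1.2.2, Mfwd_zero, mgauge_zero hP.1.2.2]
      simp
    · intro hf
      have h1 : mgauge C w = 0 :=
        le_antisymm (by nlinarith [mgauge_nonneg P (Mfwd A B w)]) (mgauge_nonneg C w)
      have := eq_zero_of_mgauge_eq_zero hC.1.1 hC.2 h1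
      simpa using this
  · rw [Set.mem_smul_set_iff_inv_smul_mem₀ hpos.ne' _ _, mem_Tplus_iff hC hP,
      Mfwd_smul, mgauge_smul hC.2 (inv_pos.2 hpos), mgauge_smul hP.2 (inv_pos.2 hpos),
      ← mul_add, inv_mul_le_iff₀ hpos, mul_one]

/-- the set of minimizers u⁺(x) equals {u : (x,u) ∈ γ(𝒫⁺,x)·𝒯⁺}. -/
theorem stmt_3 (n m : ℕ) (C : Set (Rsp2 n m)) (P : Set (Rsp n))
    (hC : IsProperCSet C) (hP : IsProperCSet P)
    (A : Matrix (Fin n) (Fin n) ℝ) (B : Matrix (Fin n) (Fin m) ℝ)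
    (Tplus : Set (Rsp2 n m)) (hT : Tplus = polarSet (polarSet C + Mtr A B '' polarSet P))
    (Pplus : Set (Rsp n)) (hPp : Pplus = Pxproj '' Tplus) :
    ∀ x : Rsp n,
      {u : Rsp m |
          mgauge C (WithLp.toLp 2 (x, u) : Rsp2 n m) + mgauge P (Mfwd A B (WithLp.toLp 2 (x, u))) =
            ⨅ v : Rsp m, (mgauge C (WithLp.toLp 2 (x, v) : Rsp2 n m) + mgauge P (Mfwd A B (WithLp.toLp 2 (x, v))))} =
        {u : Rsp m | (WithLp.toLp 2 (x, u) : Rsp2 n m) ∈ mgauge Pplus x • Tplus} := by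
  subst hPp
  subst hT
  intro x
  set T : Set (Rsp2 n m) := polarSet (polarSet C + Mtr A B '' polarSet P) with hTdef
  have hfnn : ∀ v : Rsp m,
      0 ≤ mgauge C (WithLp.toLp 2 (x, v) : Rsp2 n m) + mgauge P (Mfwd A B (WithLp.toLp 2 (x, v))) :=
    fun v => add_nonneg (mgauge_nonneg _ _) (mgauge_nonneg _ _)
  have hbdd : BddBelow (Set.range fun v : Rsp m =>
      mgauge C (WithLp.toLp 2 (x, v) : Rsp2 n m) + mgauge P (Mfwd A B (WithLp.toLp 2 (x, v)))) :=
    ⟨0, by rintro _ ⟨v, rfl⟩; exact hfnn v⟩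
  set μ : ℝ := ⨅ v : Rsp m,
      (mgauge C (WithLp.toLp 2 (x, v) : Rsp2 n m) + mgauge P (Mfwd A B (WithLp.toLp 2 (x, v)))) with hμdef
  have hμle : ∀ u : Rsp m,
      μ ≤ mgauge C (WithLp.toLp 2 (x, u) : Rsp2 n m) + mgauge P (Mfwd A B (WithLp.toLp 2 (x, u))) :=
    fun u => ciInf_le hbdd u
  have hμ0 : 0 ≤ μ := le_ciInf hfnn
  have key : ∀ η : ℝ, 0 ≤ η →
      (x ∈ η • (Pxproj '' T) ↔
        ∃ u : Rsp m, mgauge C (WithLp.toLp 2 (x, u) : Rsp2 n m) + mgauge P (Mfwd A B (WithLp.toLp 2 (x, u))) ≤ η) := by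
    intro η hη
    constructor
    · rintro ⟨p, hp, hpx⟩
      obtain ⟨t, ht, rfl⟩ := hp
      have hmem : (WithLp.toLp 2 (x, η • t.ofLp.2) : Rsp2 n m) ∈ η • T := by
        refine ⟨t, ht, ?_⟩
        rw [← hpx]
        rfl
      exact ⟨η • t.ofLp.2, (mem_smul_Tplus_iff hC hP A B hη _).1 hmem⟩
    · rintro ⟨u, hu⟩
      obtain ⟨t, ht, hts⟩ := (mem_smul_Tplus_iff hC hP A B hη _).2 hu
      exact ⟨t.ofLp.1, ⟨t, ht, rfl⟩, congrArg (fun w : Rsp2 n m => w.ofLp.1) hts⟩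
  have hgP : mgauge (Pxproj '' T) x = μ := by
    apply le_antisymm
    · by_contra h
      push_neg at h
      set ε : ℝ := (mgauge (Pxproj '' T) x - μ) / 2 with hε
      have hεpos : 0 < ε := by simp only [hε]; linarith
      obtain ⟨u, hu⟩ := exists_lt_of_ciInf_lt (show μ < μ + ε by linarith)
      have hle : mgauge (Pxproj '' T) x ≤ μ + ε :=
        mgauge_le (by linarith) ((key _ (by linarith)).2 ⟨u, hu.le⟩)
      simp only [hε] at hle
      linarith [hle]
    · refine le_csInf ⟨mgauge C (WithLp.toLp 2 (x, (0 : Rsp m)) : Rsp2 n m)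
          + mgauge P (Mfwd A B (WithLp.toLp 2 (x, (0 : Rsp m)))), hfnn 0,
          (key _ (hfnn 0)).2 ⟨0, le_rfl⟩⟩ ?_
      rintro η ⟨hη0, hxη⟩
      obtain ⟨u, hu⟩ := (key η hη0).1 hxη
      exact le_trans (hμle u) hu
  ext u
  simp only [Set.mem_setOf_eq]
  rw [hgP, mem_smul_Tplus_iff hC hP A B hμ0]
  exact ⟨fun h => le_of_eq h, fun h => le_antisymm h (hμle u)⟩
end
end

section
/- Let A ∈ ℝ^{n×n} and B ∈ ℝ^{n×m} be such that there exists K ∈ ℝ^{m×n} with (A+BK)^k → 0 as k → ∞, and let 𝒞 ⊆ ℝ^{n+m} be a proper C-set. Then there exists a proper C-set ℒ ⊆ ℝⁿ verifying the control Lyapunov decrease condition: for every x ∈ ℝⁿ there exists u ∈ ℝᵐ such that γ(ℒ, Ax+Bu) + γ(𝒞, (x,u)) ≤ γ(ℒ, x). -/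
open Pointwise Filter Topology Matrix

noncomputable section

variable {n m : ℕ}

/-- The defining set of `mgauge` is bounded below by 0. -/
lemma mgauge_bddBelow {E : Type*} [NormedAddCommGroup E] [NormedSpace ℝ E] (X : Set E) (y : E) :
    BddBelow {η : ℝ | 0 ≤ η ∧ y ∈ η • X} := ⟨0, fun _ h => h.1⟩

lemma mgauge_le_of_mem_smul {E : Type*} [NormedAddCommGroup E] [NormedSpace ℝ E] {X : Set E}
    {y : E} {η : ℝ} (hη : 0 ≤ η) (h : y ∈ η • X) : mgauge X y ≤ η :=
  csInf_le (mgauge_bddBelow X y) ⟨hη, h⟩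

set_option maxHeartbeats 1000000 in
/-- under strict stabilizability there exists a proper C-set ℒ
verifying the control Lyapunov decrease condition. -/
theorem stmt_6 (n m : ℕ) (A : Matrix (Fin n) (Fin n) ℝ) (B : Matrix (Fin n) (Fin m) ℝ)
    (hstab : ∃ K : Matrix (Fin m) (Fin n) ℝ,
      Tendsto (fun k : ℕ => (A + B * K) ^ k) atTop (nhds 0))
    (C : Set (Rsp2 n m)) (hC : IsProperCSet C) :
    ∃ L : Set (Rsp n), IsProperCSet L ∧
      ∀ x : Rsp n, ∃ u : Rsp m,
        mgauge L (Mfwd A B (WithLp.toLp 2 (x, u))) + mgauge C (WithLp.toLp 2 (x, u) : Rsp2 n m) ≤ mgauge L x := by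
  obtain ⟨K, hK⟩ := hstab
  -- the closed-loop map as a continuous linear map, abstracted
  obtain ⟨T, hTapp, N, hN1, hTN⟩ :
      ∃ T : Rsp n →L[ℝ] Rsp n, (∀ x : Rsp n, T x = Matrix.toEuclideanLin (A + B * K) x) ∧
        ∃ N : ℕ, 1 ≤ N ∧ ‖T ^ N‖ < 1/2 := by
    set Φ := Matrix.toEuclideanCLM (𝕜 := ℝ) (n := Fin n) with hΦ
    refine ⟨Φ (A + B * K), ?_, ?_⟩
    · intro x; rw [hΦ, ← Matrix.coe_toEuclideanCLM_eq_toEuclideanLin]; rfl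
    let ℓ : Matrix (Fin n) (Fin n) ℝ →ₗ[ℝ] (Rsp n →L[ℝ] Rsp n) :=
      { toFun := Φ, map_add' := map_add Φ, map_smul' := _root_.map_smul Φ }
    have hcont : Continuous ℓ := LinearMap.continuous_of_finiteDimensional ℓ
    have h1 : Tendsto (fun k : ℕ => (Φ (A + B * K)) ^ k) atTop (nhds 0) := by
      have h := (hcont.tendsto 0).comp hK
      have he : (fun k : ℕ => (Φ (A + B * K)) ^ k) = ⇑ℓ ∘ fun k : ℕ => (A + B * K) ^ k := by
        funext k
        show (Φ (A + B * K)) ^ k = Φ ((A + B * K) ^ k)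
        rw [← map_pow]
      rw [he]
      simpa [ℓ, map_zero] using h
    have h2 := h1.norm
    rw [norm_zero] at h2
    exact ((eventually_ge_atTop 1).and (h2.eventually_lt_const (by norm_num))).exists
  -- the feedback gain as a continuous linear map
  set Kc : Rsp n →L[ℝ] Rsp m :=
    LinearMap.toContinuousLinearMap (Matrix.toEuclideanLin K) with hKc
  have hKcapp : ∀ x : Rsp n, Kc x = Matrix.toEuclideanLin K x := fun x => rfl
  clear_value Kc
  set κ : ℝ := ‖Kc‖ with hκ
  have hκ0 : 0 ≤ κ := norm_nonneg _
  have hKcop : ∀ x : Rsp n, ‖Kc x‖ ≤ κ * ‖x‖ := fun x => Kc.le_opNorm x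
  clear_value κ
  -- a ball inside C
  obtain ⟨ε, hε, hball⟩ : ∃ ε > 0, Metric.ball (0 : Rsp2 n m) ε ⊆ C := by
    obtain ⟨ε, hε, hb⟩ := Metric.mem_nhds_iff.mp (mem_interior_iff_mem_nhds.mp hC.2)
    exact ⟨ε, hε, hb⟩
  have hC0 : (0 : Rsp2 n m) ∈ C := hC.1.2.2
  -- mgauge C is bounded by a multiple of the norm
  have hCle : ∀ w : Rsp2 n m, mgauge C w ≤ (2 / ε) * ‖w‖ := by
    intro w
    rcases eq_or_ne w 0 with rfl | hw
    · have h0 : mgauge C (0 : Rsp2 n m) ≤ 0 := by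
        apply mgauge_le_of_mem_smul le_rfl
        exact Set.mem_smul_set.mpr ⟨0, hC0, by simp⟩
      refine h0.trans ?_
      positivity
    · have hwpos : 0 < ‖w‖ := norm_pos_iff.mpr hw
      set η : ℝ := (2 / ε) * ‖w‖ with hηdef
      have hηpos : 0 < η := by positivity
      apply mgauge_le_of_mem_smul hηpos.le
      refine Set.mem_smul_set.mpr ⟨η⁻¹ • w, hball ?_, smul_inv_smul₀ hηpos.ne' w⟩
      have hcalc : η⁻¹ * ‖w‖ = ε / 2 := by
        rw [hηdef]; field_simp
      rw [Metric.mem_ball, dist_zero_right, norm_smul, norm_inv,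
        Real.norm_of_nonneg hηpos.le, hcalc]
      linarith
  -- norm of an L² pair
  have hpairnorm : ∀ w : Rsp2 n m, ‖w‖ ≤ ‖w.ofLp.1‖ + ‖w.ofLp.2‖ := by
    intro w
    rw [WithLp.prod_norm_eq_of_L2]
    change √(‖w.ofLp.1‖ ^ 2 + ‖w.ofLp.2‖ ^ 2) ≤ ‖w.ofLp.1‖ + ‖w.ofLp.2‖
    nlinarith [Real.sq_sqrt (by positivity : (0:ℝ) ≤ ‖w.ofLp.1‖^2 + ‖w.ofLp.2‖^2),
      Real.sqrt_nonneg (‖w.ofLp.1‖^2 + ‖w.ofLp.2‖^2), norm_nonneg w.ofLp.1, norm_nonneg w.ofLp.2]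
  -- the Lyapunov norm
  set c₀ : ℝ := (2 / ε) * (1 + κ) with hc₀
  have hc₀pos : 0 < c₀ := by
    rw [hc₀]; apply mul_pos (by positivity); linarith
  set β : ℝ := 2 * c₀ with hβ
  have hβpos : 0 < β := by rw [hβ]; linarith
  clear_value c₀ β
  set V : Rsp n → ℝ := fun x => β * ∑ k ∈ Finset.range N, ‖(T ^ k) x‖ with hV
  clear_value V
  have hVnonneg : ∀ x, 0 ≤ V x := by
    intro x
    have h : (0:ℝ) ≤ ∑ k ∈ Finset.range N, ‖(T ^ k) x‖ :=
      Finset.sum_nonneg fun k _ => norm_nonneg _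
    simp only [hV]
    exact mul_nonneg hβpos.le h
  have hVzero : V 0 = 0 := by
    simp only [hV, map_zero, norm_zero, Finset.sum_const_zero, mul_zero]
  have hVlower : ∀ x, β * ‖x‖ ≤ V x := by
    intro x
    have h0 : ‖(T ^ 0) x‖ ≤ ∑ k ∈ Finset.range N, ‖(T ^ k) x‖ :=
      Finset.single_le_sum (fun k _ => norm_nonneg ((T ^ k) x))
        (Finset.mem_range.mpr hN1)
    simp only [pow_zero, ContinuousLinearMap.one_apply] at h0
    simp only [hV]
    exact mul_le_mul_of_nonneg_left h0 hβpos.le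
  have hVsmul : ∀ (c : ℝ) (x : Rsp n), V (c • x) = |c| * V x := by
    intro c x
    simp only [hV, _root_.map_smul, norm_smul, Real.norm_eq_abs, ← Finset.mul_sum]
    ring
  have hVadd : ∀ x y : Rsp n, V (x + y) ≤ V x + V y := by
    intro x y
    have h1 : ∑ k ∈ Finset.range N, ‖(T ^ k) (x + y)‖ ≤
        ∑ k ∈ Finset.range N, (‖(T ^ k) x‖ + ‖(T ^ k) y‖) := by
      refine Finset.sum_le_sum fun k _ => ?_
      rw [map_add]; exact norm_add_le _ _
    rw [Finset.sum_add_distrib] at h1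
    simp only [hV]
    nlinarith [h1]
  have hVcont : Continuous V := by
    simp only [hV]
    exact continuous_const.mul (continuous_finset_sum _ fun k _ => ((T ^ k).continuous.norm))
  set Cmax : ℝ := β * ∑ k ∈ Finset.range N, ‖T ^ k‖ + 1 with hCmax
  have hsumn : (0:ℝ) ≤ ∑ k ∈ Finset.range N, ‖T ^ k‖ :=
    Finset.sum_nonneg fun k _ => norm_nonneg _
  have hCmaxpos : 0 < Cmax := by
    have h : (0:ℝ) ≤ β * ∑ k ∈ Finset.range N, ‖T ^ k‖ := mul_nonneg hβpos.le hsumn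
    rw [hCmax]; linarith
  have hVupper : ∀ x, V x ≤ Cmax * ‖x‖ := by
    intro x
    have h1 : ∑ k ∈ Finset.range N, ‖(T ^ k) x‖ ≤
        (∑ k ∈ Finset.range N, ‖T ^ k‖) * ‖x‖ := by
      rw [Finset.sum_mul]
      exact Finset.sum_le_sum fun k _ => (T ^ k).le_opNorm x
    simp only [hV, hCmax]
    nlinarith [norm_nonneg x, h1]
  -- the set L
  set L : Set (Rsp n) := {x | V x ≤ 1} with hL
  have h0L : (0 : Rsp n) ∈ L := by
    show V 0 ≤ 1
    rw [hVzero]; norm_num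
  -- mgauge L is squeezed by V
  have hgauge_le : ∀ y : Rsp n, mgauge L y ≤ V y := by
    intro y
    rcases eq_or_lt_of_le (hVnonneg y) with h0 | hpos
    · have hy0 : y = 0 := by
        have h := hVlower y
        have hn : ‖y‖ ≤ 0 := by rw [← h0] at h; nlinarith [norm_nonneg y]
        exact norm_eq_zero.mp (le_antisymm hn (norm_nonneg y))
      subst hy0
      rw [← h0]
      apply mgauge_le_of_mem_smul le_rfl
      exact Set.mem_smul_set.mpr ⟨0, h0L, by simp⟩
    · apply mgauge_le_of_mem_smul hpos.le
      refine Set.mem_smul_set.mpr ⟨(V y)⁻¹ • y, ?_, smul_inv_smul₀ hpos.ne' y⟩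
      show V ((V y)⁻¹ • y) ≤ 1
      rw [hVsmul, abs_of_nonneg (inv_nonneg.mpr hpos.le), inv_mul_cancel₀ hpos.ne']
  have hle_gauge : ∀ y : Rsp n, V y ≤ mgauge L y := by
    intro y
    apply le_csInf
    · have hp : (0:ℝ) < V y + 1 := by linarith [hVnonneg y]
      refine ⟨V y + 1, hp.le,
        Set.mem_smul_set.mpr ⟨(V y + 1)⁻¹ • y, ?_, smul_inv_smul₀ hp.ne' y⟩⟩
      show V ((V y + 1)⁻¹ • y) ≤ 1
      rw [hVsmul, abs_of_nonneg (inv_nonneg.mpr hp.le)]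
      have h1 : (V y + 1)⁻¹ * V y ≤ (V y + 1)⁻¹ * (V y + 1) :=
        mul_le_mul_of_nonneg_left (by linarith) (inv_nonneg.mpr hp.le)
      rw [inv_mul_cancel₀ hp.ne'] at h1
      exact h1
    · rintro η ⟨hη, hmem⟩
      obtain ⟨z, hz, hzy⟩ := Set.mem_smul_set.mp hmem
      have hz1 : V z ≤ 1 := hz
      rw [← hzy, hVsmul, abs_of_nonneg hη]
      nlinarith [hVnonneg z]
  -- properness of L
  have hLproper : IsProperCSet L := by
    refine ⟨⟨?_, ?_, h0L⟩, ?_⟩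
    · -- compact
      rw [Metric.isCompact_iff_isClosed_bounded]
      refine ⟨isClosed_le hVcont continuous_const, ?_⟩
      apply (Metric.isBounded_closedBall (x := (0:Rsp n)) (r := β⁻¹)).subset
      intro x hx
      rw [Metric.mem_closedBall, dist_zero_right]
      have h1 : β * ‖x‖ ≤ 1 := (hVlower x).trans hx
      rw [inv_eq_one_div, le_div_iff₀ hβpos]
      linarith
    · -- convex
      intro a ha b hb s t hs ht hst
      have ha' : V a ≤ 1 := ha
      have hb' : V b ≤ 1 := hb
      have h1 : V (s • a + t • b) ≤ s * V a + t * V b := by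
        refine (hVadd _ _).trans ?_
        rw [hVsmul, hVsmul, abs_of_nonneg hs, abs_of_nonneg ht]
      show V (s • a + t • b) ≤ 1
      nlinarith
    · -- 0 in interior
      have hsub : Metric.ball (0 : Rsp n) Cmax⁻¹ ⊆ L := by
        intro x hx
        rw [Metric.mem_ball, dist_zero_right] at hx
        have h1 : V x ≤ Cmax * ‖x‖ := hVupper x
        have h2 : Cmax * ‖x‖ < Cmax * Cmax⁻¹ :=
          mul_lt_mul_of_pos_left hx hCmaxpos
        rw [mul_inv_cancel₀ hCmaxpos.ne'] at h2
        exact (h1.trans h2.le : V x ≤ 1)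
      exact interior_maximal hsub Metric.isOpen_ball
        (Metric.mem_ball_self (inv_pos.mpr hCmaxpos))
  refine ⟨L, hLproper, fun x => ⟨Kc x, ?_⟩⟩
  -- the closed loop identity
  have hKcx : Kc x = Matrix.toEuclideanLin K x := hKcapp x
  have hMf : Mfwd A B (WithLp.toLp 2 (x, Kc x)) = T x := by
    rw [hTapp x]
    show Matrix.toEuclideanLin A x + Matrix.toEuclideanLin B (Kc x)
        = Matrix.toEuclideanLin (A + B * K) x
    rw [hKcx]
    have e1 : Matrix.toEuclideanLin (B * K) x
        = Matrix.toEuclideanLin B (Matrix.toEuclideanLin K x) := by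
      simp [Matrix.toEuclideanLin_apply, Matrix.mulVec_mulVec]
    rw [map_add, LinearMap.add_apply, e1]
  -- decrease of V along the closed loop
  have hshift : ∀ k : ℕ, (T ^ k) (T x) = (T ^ (k + 1)) x := by
    intro k; rw [pow_succ]; rfl
  have hdec : V (T x) + c₀ * ‖x‖ ≤ V x := by
    set S : ℝ := ∑ k ∈ Finset.range N, ‖(T ^ k) x‖ with hS
    have hTNx : ‖(T ^ N) x‖ ≤ (1/2) * ‖x‖ := by
      refine ((T ^ N).le_opNorm x).trans ?_
      exact mul_le_mul_of_nonneg_right hTN.le (norm_nonneg x)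
    have hsum : ∑ k ∈ Finset.range N, ‖(T ^ k) (T x)‖ = S - ‖x‖ + ‖(T ^ N) x‖ := by
      calc ∑ k ∈ Finset.range N, ‖(T ^ k) (T x)‖
          = ∑ k ∈ Finset.range N, ‖(T ^ (k + 1)) x‖ :=
            Finset.sum_congr rfl fun k _ => by rw [hshift]
        _ = S - ‖x‖ + ‖(T ^ N) x‖ := by
            have h1 := Finset.sum_range_succ' (fun k => ‖(T ^ k) x‖) N
            have h2 := Finset.sum_range_succ (fun k => ‖(T ^ k) x‖) N
            simp only [pow_zero, ContinuousLinearMap.one_apply] at h1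
            rw [h2] at h1
            linarith
    have hVTx : V (T x) = β * (S - ‖x‖ + ‖(T ^ N) x‖) := by
      simp only [hV]
      rw [hsum]
    have hVx : V x = β * S := by simp only [hV, ← hS]
    have hSnn : 0 ≤ S := by
      rw [hS]
      exact Finset.sum_nonneg fun k _ => norm_nonneg _
    clear_value S
    have key : 2 * c₀ * ‖(T ^ N) x‖ ≤ 2 * c₀ * ((1/2) * ‖x‖) :=
      mul_le_mul_of_nonneg_left hTNx (by linarith)
    rw [hVTx, hVx, hβ]
    linarith [key]
  -- conclude
  have g1 : mgauge L (Mfwd A B (WithLp.toLp 2 (x, Kc x))) ≤ V (T x) := by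
    rw [hMf]; exact hgauge_le (T x)
  have h2 : (0:ℝ) < 2/ε := by positivity
  have hCpair : ∀ w : Rsp2 n m, mgauge C w ≤ 2/ε * (‖w.ofLp.1‖ + ‖w.ofLp.2‖) := fun w =>
    (hCle w).trans (mul_le_mul_of_nonneg_left (hpairnorm w) h2.le)
  have g2 := hCpair (WithLp.toLp 2 (x, Kc x) : Rsp2 n m)
  have e1 : ‖(WithLp.toLp 2 (x, Kc x) : Rsp2 n m).ofLp.1‖ = ‖x‖ := rfl
  have e2 : ‖(WithLp.toLp 2 (x, Kc x) : Rsp2 n m).ofLp.2‖ = ‖Kc x‖ := rfl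
  rw [e1, e2] at g2
  have hmul : (2/ε) * ‖Kc x‖ ≤ (2/ε) * (κ * ‖x‖) :=
    mul_le_mul_of_nonneg_left (hKcop x) h2.le
  have hcx : c₀ * ‖x‖ = 2/ε * (1 + κ) * ‖x‖ := by rw [hc₀]
  have g3 : 2/ε * (‖x‖ + ‖Kc x‖) ≤ c₀ * ‖x‖ := by
    rw [hcx]; ring_nf; ring_nf at hmul; linarith
  linarith [g1, g2.trans g3, hdec, hle_gauge x]
end
end

section
/- Let 𝒞 ⊆ ℝ^{n+m} be a proper C-set, let A ∈ ℝ^{n×n}, B ∈ ℝ^{n×m}, and let S ⊆ ℝⁿ be a C-set. Define the sequences 𝒯₁ = (𝒞* ⊕ MᵀS)*, 𝒫₁ = P_x𝒯₁, and for k ≥ 1, 𝒯_{k+1} = (𝒞* ⊕ Mᵀ𝒫_k*)*, 𝒫_{k+1} = P_x𝒯_{k+1}. If S ⊆ 𝒫₁*, then for every k ≥ 1, 𝒫_{k+1} ⊆ 𝒫_k. -/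
open Pointwise Filter Topology Matrix

noncomputable section

variable {n m : ℕ}

lemma polarSet_antitone {E : Type*} [NormedAddCommGroup E] [InnerProductSpace ℝ E]
    {X Y : Set E} (h : X ⊆ Y) : polarSet Y ⊆ polarSet X :=
  fun _ hy x hx => hy x (h hx)

/-- if S ⊆ 𝒫₁*, the iterates are monotonically nonincreasing. -/
theorem stmt_10 (n m : ℕ) (C : Set (Rsp2 n m)) (hC : IsProperCSet C)
    (A : Matrix (Fin n) (Fin n) ℝ) (B : Matrix (Fin n) (Fin m) ℝ)
    (S : Set (Rsp n)) (hS : IsCSet S)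
    (P : ℕ → Set (Rsp n))
    (hP0 : P 0 = Pxproj '' polarSet (polarSet C + Mtr A B '' S))
    (hPs : ∀ k : ℕ, P (k + 1) = Pxproj '' polarSet (polarSet C + Mtr A B '' polarSet (P k)))
    (hmono : S ⊆ polarSet (P 0)) :
    ∀ k : ℕ, P (k + 1) ⊆ P k := by
  intro k
  induction k with
  | zero =>
    rw [hPs 0]; conv_rhs => rw [hP0]
    exact Set.image_mono (polarSet_antitone
      (Set.add_subset_add_left (Set.image_mono hmono)))
  | succ k ih =>
    rw [hPs (k + 1)]; conv_rhs => rw [hPs k]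
    exact Set.image_mono (polarSet_antitone
      (Set.add_subset_add_left (Set.image_mono (polarSet_antitone ih))))
end
end
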